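/- Let X be a pre-Riesz space and let P and Q be band projections on X. Then P + Q − PQ is a band projection, and its range equals the vector space sum PX + QX. In particular, the sum of two projection bands in X is again a projection band. -/

import Mathlib

open Pointwise

variable {X : Type*} [AddCommGroup X] [PartialOrder X] [IsOrderedAddMonoid X] [Module ℝ X]
  [PosSMulStrictMono ℝ X]

/-- Two elements of an ordered vector space are disjoint if the sets `{x+y, -x-y}` and
`{x-y, y-x}` have the same set of upper bounds. -/
def UDisjoint (x y : X) : Prop :=
  upperBounds ({x + y, -x - y} : Set X) = upperBounds ({x - y, y - x} : Set X)

/-- The disjoint complement `S^⊥` of a set `S`. -/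
def dComp (S : Set X) : Set X := {x : X | ∀ s ∈ S, UDisjoint x s}

/-- A band: a set equal to its double disjoint complement. -/
def IsBand (B : Set X) : Prop := B = dComp (dComp B)

/-- A projection band: a band `B` with `B ∩ B^⊥ = {0}` and `B + B^⊥ = X`. -/
def IsProjBand (B : Set X) : Prop :=
  IsBand B ∧ B ∩ dComp B = {0} ∧ ∀ x : X, ∃ b ∈ B, ∃ c ∈ dComp B, x = b + c

/-- A positive linear operator. -/
def IsPosMap (T : X →ₗ[ℝ] X) : Prop := ∀ x : X, 0 ≤ x → 0 ≤ T x

/-- A band projection: a linear projection whose range is a projection band and whose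
kernel is the disjoint complement of the range. -/
def IsBandProj (P : X →ₗ[ℝ] X) : Prop :=
  P ∘ₗ P = P ∧ IsProjBand (Set.range ⇑P) ∧ (LinearMap.ker P : Set X) = dComp (Set.range ⇑P)

/-- A pre-Riesz space: for every nonempty finite `A ⊆ X` and every `x`, if the upper bounds
of `x + A` are contained in the upper bounds of `A`, then `x ≥ 0`. -/
def IsPreRiesz (X : Type*) [AddCommGroup X] [PartialOrder X] [IsOrderedAddMonoid X] [Module ℝ X]
    [PosSMulStrictMono ℝ X] : Prop :=
  ∀ (A : Set X) (x : X), A.Finite → A.Nonempty →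
    upperBounds ((x + ·) '' A) ⊆ upperBounds A → 0 ≤ x

section PreRieszAux

set_option linter.unusedSectionVars false
set_option maxHeartbeats 1000000

lemma mem_ub_pair {a b v : X} : v ∈ upperBounds ({a, b} : Set X) ↔ a ≤ v ∧ b ≤ v := by
  constructor
  · intro h; exact ⟨h (by simp), h (by simp)⟩
  · rintro ⟨h1, h2⟩ w hw
    rcases hw with rfl | hw
    · exact h1
    · rw [Set.mem_singleton_iff] at hw; subst hw; exact h2

lemma nonneg_of_add_self {a : X} (h : 0 ≤ a + a) : 0 ≤ a := by
  have h2 : (0:X) ≤ (1/2 : ℝ) • (a + a) := smul_nonneg (by norm_num) h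
  have h3 : (1/2 : ℝ) • (a + a) = a := by rw [← two_smul ℝ a, smul_smul]; norm_num
  rwa [h3] at h2

lemma self_add_eq_zero' {a : X} (h : a + a = 0) : a = 0 := by
  have h1 : (0:X) ≤ a := nonneg_of_add_self h.ge
  have h2 : a ≤ 0 := by
    have h4 : (0:X) ≤ -a + -a := by rw [← neg_add, h]; simp
    simpa using nonneg_of_add_self h4
  exact le_antisymm h2 h1

lemma udis_symm {x y : X} (h : UDisjoint x y) : UDisjoint y x := by
  unfold UDisjoint at *
  rw [show y + x = x + y from by abel, show -y - x = -x - y from by abel, h, Set.pair_comm]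

lemma udis_neg_right {x y : X} (h : UDisjoint x y) : UDisjoint x (-y) := by
  unfold UDisjoint at *
  rw [show x + -y = x - y from by abel, show -x - -y = y - x from by abel,
    show x - -y = x + y from by abel, show -y - x = -x - y from by abel, ← h]

lemma udis_neg_left {x y : X} (h : UDisjoint x y) : UDisjoint (-x) y :=
  udis_symm (udis_neg_right (udis_symm h))

lemma udisjoint_zero_right (x : X) : UDisjoint x 0 := by
  unfold UDisjoint
  rw [show x + 0 = x - 0 from by abel, show -x - 0 = 0 - x from by abel]

lemma udisjoint_self_zero {d : X} (h : UDisjoint d d) : d = 0 := by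
  unfold UDisjoint at h
  have h0 : (0:X) ∈ upperBounds ({d - d, d - d} : Set X) := by
    rw [mem_ub_pair]; simp
  rw [← h, mem_ub_pair] at h0
  obtain ⟨h1, h2⟩ := h0
  have h3 : (0:X) ≤ d + d := by
    have : -(d+d) ≤ 0 := by simpa [neg_add] using h2
    exact neg_nonpos.mp this
  exact self_add_eq_zero' (le_antisymm h1 h3)

lemma udis_bound {x y : X} (h : UDisjoint x y) {t v : X}
    (h1 : t + (x + y) ≤ v) (h2 : t - (x + y) ≤ v) :
    t + (x - y) ≤ v ∧ t + (y - x) ≤ v := by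
  have m : v - t ∈ upperBounds ({x + y, -x - y} : Set X) := by
    rw [mem_ub_pair]
    constructor
    · rw [le_sub_iff_add_le, add_comm]; exact h1
    · rw [le_sub_iff_add_le, show -x - y + t = t - (x + y) from by abel]; exact h2
  rw [h, mem_ub_pair] at m
  obtain ⟨m1, m2⟩ := m
  rw [le_sub_iff_add_le, add_comm] at m1 m2
  exact ⟨m1, m2⟩

lemma exists_upper (hX : IsPreRiesz X) (x y : X) : ∃ v, x ≤ v ∧ y ≤ v := by
  suffices h : ∀ z : X, ∃ v, z ≤ v ∧ 0 ≤ v by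
    obtain ⟨v, hv1, hv2⟩ := h (x - y)
    exact ⟨v + y, by simpa [sub_add_cancel] using add_le_add_left hv1 y,
      by simpa using add_le_add_right hv2 y⟩
  intro z
  by_contra hc
  push_neg at hc
  have hub : upperBounds ({z, 0} : Set X) = ∅ := by
    ext u; simp only [Set.mem_empty_iff_false, iff_false]
    intro hu
    rw [mem_ub_pair] at hu
    exact hc u hu.1 hu.2
  have h0 : (0:X) ≤ z := by
    apply hX {0, -z} z (Set.toFinite _) ⟨0, by simp⟩
    intro u hu
    exfalso
    have himg : (z + ·) '' ({0, -z} : Set X) = {z, 0} := by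
      rw [Set.image_pair]; simp
    rw [himg, hub] at hu
    exact hu
  exact hc z le_rfl h0

-- certificate lemma
lemma disj_add_nonpos (hX : IsPreRiesz X) {s₁ s₂ β ς : X} (hsum : s₁ + s₂ = β + ς)
    (d1 : UDisjoint s₁ β) (d2 : UDisjoint s₂ β) (d3 : UDisjoint ς β) : 0 ≤ -β := by
  set a := s₁ + s₁ with ha
  set b := s₂ + s₂ with hb
  set A : Set X := {β, β + β, β + a, β + (β + a), β + (a + b), β + (β + (a + b))} with hA
  apply hX A (-β) (Set.toFinite _) ⟨β, by simp [hA]⟩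
  intro v hv
  -- extract the knowns
  have key : ∀ w ∈ A, -β + w ≤ v := fun w hw => hv ⟨w, hw, rfl⟩
  have k0 : (0:X) ≤ v := by simpa using key β (by simp [hA])
  have k1 : β ≤ v := by simpa using key (β + β) (by simp [hA])
  have k2 : a ≤ v := by simpa using key (β + a) (by simp [hA])
  have k3 : β + a ≤ v := by simpa [neg_add_cancel_left] using key (β + (β + a)) (by simp [hA])
  have k4 : a + b ≤ v := by simpa using key (β + (a + b)) (by simp [hA])
  have k5 : β + (a + b) ≤ v := by
    simpa [neg_add_cancel_left] using key (β + (β + (a + b))) (by simp [hA])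
  -- step 1 : via d3 with t = s₁ + s₂
  have st1 : β + β ≤ v := by
    have h1 : (s₁ + s₂) + (ς + β) ≤ v := by
      have e : (s₁ + s₂) + (ς + β) = a + b := by
        rw [ha, hb, show ς = s₁ + s₂ - β from by rw [eq_sub_iff_add_eq, add_comm]; exact hsum.symm]
        abel
      rw [e]; exact k4
    have h2 : (s₁ + s₂) - (ς + β) ≤ v := by
      have e : (s₁ + s₂) - (ς + β) = 0 := by rw [hsum]; abel
      rw [e]; exact k0
    have := (udis_bound d3 h1 h2).2
    have e : (s₁ + s₂) + (β - ς) = β + β := by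
      have : ς = s₁ + s₂ - β := by rw [eq_sub_iff_add_eq, add_comm]; exact hsum.symm
      rw [this]; abel
    rwa [e] at this
  -- step 2 : via d1.neg_right with t = s₁ + β
  have st2 : β + (β + a) ≤ v := by
    have h1 : (s₁ + β) + (s₁ + -β) ≤ v := by
      have e : (s₁ + β) + (s₁ + -β) = a := by rw [ha]; abel
      rw [e]; exact k2
    have h2 : (s₁ + β) - (s₁ + -β) ≤ v := by
      have e : (s₁ + β) - (s₁ + -β) = β + β := by abel
      rw [e]; exact st1
    have := (udis_bound (udis_neg_right d1) h1 h2).1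
    have e : (s₁ + β) + (s₁ - -β) = β + (β + a) := by rw [ha]; abel
    rwa [e] at this
  -- step 3 : via d2.neg_right with t = a + s₂ + β
  have st3 : β + (β + (a + b)) ≤ v := by
    have h1 : (a + s₂ + β) + (s₂ + -β) ≤ v := by
      have e : (a + s₂ + β) + (s₂ + -β) = a + b := by rw [hb]; abel
      rw [e]; exact k4
    have h2 : (a + s₂ + β) - (s₂ + -β) ≤ v := by
      have e : (a + s₂ + β) - (s₂ + -β) = β + (β + a) := by abel
      rw [e]; exact st2
    have := (udis_bound (udis_neg_right d2) h1 h2).1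
    have e : (a + s₂ + β) + (s₂ - -β) = β + (β + (a + b)) := by rw [hb]; abel
    rwa [e] at this
  -- conclude: v bounds A
  intro w hw
  simp only [hA, Set.mem_insert_iff, Set.mem_singleton_iff] at hw
  rcases hw with rfl | rfl | rfl | rfl | rfl | rfl
  · exact k1
  · exact st1
  · exact k3
  · exact st2
  · exact k5
  · exact st3

lemma disj_add_eq_zero (hX : IsPreRiesz X) {s₁ s₂ β ς : X} (hsum : s₁ + s₂ = β + ς)
    (d1 : UDisjoint s₁ β) (d2 : UDisjoint s₂ β) (d3 : UDisjoint ς β) : β = 0 := by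
  have h1 : 0 ≤ -β := disj_add_nonpos hX hsum d1 d2 d3
  have hsum' : -s₁ + -s₂ = -β + -ς := by rw [← neg_add, ← neg_add, hsum]
  have h2 : 0 ≤ -(-β) :=
    disj_add_nonpos hX hsum' (udis_neg_right (udis_neg_left d1))
      (udis_neg_right (udis_neg_left d2)) (udis_neg_right (udis_neg_left d3))
  rw [neg_neg] at h2
  have h3 : β ≤ 0 := by simpa using h1
  exact le_antisymm h3 (by simpa using h2)

lemma parts_nonneg {b c : X} (h : UDisjoint b c) (hx : 0 ≤ b + c) : 0 ≤ b ∧ 0 ≤ c := by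
  have hm : b + c ∈ upperBounds ({b + c, -b - c} : Set X) := by
    rw [mem_ub_pair]
    refine ⟨le_rfl, le_trans ?_ hx⟩
    rw [show -b - c = -(b+c) from by abel]
    exact neg_nonpos.mpr hx
  rw [h, mem_ub_pair] at hm
  obtain ⟨h1, h2⟩ := hm
  constructor
  · apply nonneg_of_add_self
    have : c - b + (b + b) = b + c := by abel
    calc (0:X) = (c - b) - (c - b) := by abel
    _ ≤ (b + c) - (c - b) := sub_le_sub_right h2 _
    _ = b + b := by abel
  · apply nonneg_of_add_self
    calc (0:X) = (b - c) - (b - c) := by abel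
    _ ≤ (b + c) - (b - c) := sub_le_sub_right h1 _
    _ = c + c := by abel


structure Nice (f : X → X) : Prop where
  add : ∀ x y, f (x + y) = f x + f y
  idem : ∀ x, f (f x) = f x
  pos : ∀ x, 0 ≤ x → 0 ≤ f x
  dom : ∀ x, 0 ≤ x → f x ≤ x


namespace Nice

variable {f g h : X → X}

lemma zero (hf : Nice f) : f 0 = 0 := by
  have h := hf.add 0 0
  rw [add_zero] at h
  exact left_eq_add.mp h

lemma sub (hf : Nice f) (x y : X) : f (x - y) = f x - f y := by
  have h := hf.add (x - y) y
  rw [sub_add_cancel] at h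
  rw [eq_sub_iff_add_eq, ← h]

lemma neg (hf : Nice f) (x : X) : f (-x) = -f x := by
  have := hf.sub 0 x
  simpa [hf.zero] using this

lemma mono (hf : Nice f) {x y : X} (h : x ≤ y) : f x ≤ f y := by
  have h1 : 0 ≤ f (y - x) := hf.pos _ (by simpa using h)
  rw [hf.sub] at h1
  exact sub_nonneg.mp h1

lemma compl (hf : Nice f) : Nice (fun x => x - f x) := by
  constructor
  · intro x y; simp only [hf.add]; abel
  · intro x; simp only [hf.sub, hf.idem]; abel
  · intro x hx; simpa using hf.dom x hx
  · intro x hx; simpa using hf.pos x hx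

-- positive decomposition in kernel
lemma ker_decomp (hX : IsPreRiesz X) (hf : Nice f) {z : X} (hz : f z = 0) :
    ∃ u w : X, f u = 0 ∧ f w = 0 ∧ 0 ≤ u ∧ 0 ≤ w ∧ z = u - w := by
  obtain ⟨v, hv1, hv0⟩ := exists_upper hX z 0
  refine ⟨v - f v, (v - f v) - z, ?_, ?_, ?_, ?_, by abel⟩
  · rw [hf.sub, hf.idem]; abel
  · rw [hf.sub, hf.sub, hf.idem, hz]; abel
  · exact sub_nonneg.mpr (hf.dom v hv0)
  · have h1 : 0 ≤ (v - z) - f (v - z) := by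
      have h2 : (0:X) ≤ v - z := sub_nonneg.mpr hv1
      exact sub_nonneg.mpr (hf.dom _ h2)
    rw [hf.sub, hz] at h1
    calc (0:X) ≤ (v - z) - (f v - 0) := h1
    _ = (v - f v) - z := by abel
  
-- kernel invariance
lemma ker_inv (hX : IsPreRiesz X) (hf : Nice f) (hg : Nice g) {z : X} (hz : f z = 0) :
    f (g z) = 0 := by
  obtain ⟨u, w, hu, hw, hu0, hw0, rfl⟩ := hf.ker_decomp hX hz
  have key : ∀ t : X, f t = 0 → 0 ≤ t → f (g t) = 0 := by
    intro t ht ht0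
    have h1 : 0 ≤ f (g t) := hf.pos _ (hg.pos _ ht0)
    have h2 : f (g t) ≤ f t := hf.mono (hg.dom _ ht0)
    rw [ht] at h2
    exact le_antisymm h2 h1
  rw [hg.sub, hf.sub, key u hu hu0, key w hw hw0, sub_zero]

lemma fix_inv (hX : IsPreRiesz X) (hf : Nice f) (hg : Nice g) {z : X} (hz : f z = z) :
    f (g z) = g z := by
  have hz' : (fun x => x - f x) z = 0 := by simp only; rw [hz, sub_self]
  have h := ker_inv hX hf.compl hg hz'
  exact (sub_eq_zero.mp h).symm

lemma comm (hX : IsPreRiesz X) (hf : Nice f) (hg : Nice g) (x : X) :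
    f (g x) = g (f x) := by
  have h1 : f (g (f x)) = g (f x) := fix_inv hX hf hg (hf.idem x)
  have h2 : f (g (x - f x)) = 0 := by
    apply ker_inv hX hf hg
    rw [hf.sub, hf.idem, sub_self]
  have h3 : g x = g (f x) + g (x - f x) := by
    rw [← hg.add]; congr 1; abel
  rw [h3, hf.add, h1, h2, add_zero]


lemma fix_ker_disjoint (hf : Nice f) {z w : X} (hz : f z = 0) (hw : f w = w) :
    UDisjoint w z := by
  have cmono : ∀ {x y : X}, x ≤ y → x - f x ≤ y - f y := by
    intro x y hxy
    have := hf.compl.mono hxy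
    simpa using this
  unfold UDisjoint
  ext v
  rw [mem_ub_pair, mem_ub_pair]
  constructor
  · rintro ⟨h1, h2⟩
    have a1 : w ≤ f v := by
      have := hf.mono h1; rwa [hf.add, hz, add_zero, hw] at this
    have a2 : -w ≤ f v := by
      have := hf.mono h2
      rwa [show -w - z = -(w + z) from by abel, hf.neg, hf.add, hz, add_zero, hw] at this
    have b1 : z ≤ v - f v := by
      have h3 := cmono h1
      rwa [hf.add, hz, add_zero, hw, add_sub_cancel_left] at h3
    have b2 : -z ≤ v - f v := by
      have h3 := cmono h2
      rwa [show -w - z = -(w + z) from by abel, hf.neg, hf.add, hz, add_zero, hw,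
        show -(w + z) - -w = -z from by abel] at h3
    constructor
    · have h4 := add_le_add a1 b2
      rwa [show w + -z = w - z from by abel, show f v + (v - f v) = v from by abel] at h4
    · have h4 := add_le_add a2 b1
      rwa [show -w + z = z - w from by abel, show f v + (v - f v) = v from by abel] at h4
  · rintro ⟨h1, h2⟩
    have a1 : w ≤ f v := by
      have := hf.mono h1; rwa [hf.sub, hz, sub_zero, hw] at this
    have a2 : -w ≤ f v := by
      have := hf.mono h2
      rwa [show z - w = -(w - z) from by abel, hf.neg, hf.sub, hz, sub_zero, hw] at this
    have b1 : -z ≤ v - f v := by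
      have h3 := cmono h1
      rwa [hf.sub, hz, sub_zero, hw, show (w - z) - w = -z from by abel] at h3
    have b2 : z ≤ v - f v := by
      have h3 := cmono h2
      rwa [show z - w = -(w - z) from by abel, hf.neg, hf.sub, hz, sub_zero, hw,
        show -(w - z) - -w = z from by abel] at h3
    constructor
    · have h4 := add_le_add a1 b2
      rwa [show f v + (v - f v) = v from by abel] at h4
    · have h4 := add_le_add a2 b1
      rwa [show -w + -z = -w - z from by abel, show f v + (v - f v) = v from by abel] at h4

lemma ker_of_fix_compl (hh : Nice h) (x : X) : h (x - h x) = 0 := by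
  rw [hh.sub, hh.idem, sub_self]

lemma dComp_fix_eq_ker (hX : IsPreRiesz X) (hh : Nice h) :
    dComp {x : X | h x = x} = {x : X | h x = 0} := by
  ext z
  constructor
  · intro hz
    have hfix : h z ∈ {x : X | h x = x} := hh.idem z
    have d1 : UDisjoint z (h z) := hz _ hfix
    have d2 : UDisjoint (h z) (z - h z) := hh.fix_ker_disjoint (hh.ker_of_fix_compl z) (hh.idem z)
    have hsum : z + -(z - h z) = h z + 0 := by abel
    exact disj_add_eq_zero hX hsum d1 (udis_neg_left (udis_symm d2))
      (udis_symm (udisjoint_zero_right (h z)))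
  · intro hz s hs
    exact udis_symm (hh.fix_ker_disjoint hz hs)

lemma fix_eq_dComp_ker (hX : IsPreRiesz X) (hh : Nice h) :
    {x : X | h x = x} = dComp {x : X | h x = 0} := by
  ext w
  constructor
  · intro hw z hz
    exact hh.fix_ker_disjoint hz hw
  · intro hw
    have hd : h (w - h w) = 0 := hh.ker_of_fix_compl w
    have d1 : UDisjoint w (w - h w) := hw _ hd
    have d2 : UDisjoint (h w) (w - h w) := hh.fix_ker_disjoint hd (hh.idem w)
    have hsum : w + -(h w) = (w - h w) + 0 := by abel
    have h0 := disj_add_eq_zero hX hsum d1 (udis_neg_left d2)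
      (udis_symm (udisjoint_zero_right _))
    exact (sub_eq_zero.mp h0).symm

lemma projband_fix (hX : IsPreRiesz X) (hh : Nice h) :
    IsProjBand {x : X | h x = x} := by
  refine ⟨?_, ?_, ?_⟩
  · show {x : X | h x = x} = dComp (dComp {x : X | h x = x})
    rw [dComp_fix_eq_ker hX hh]
    exact fix_eq_dComp_ker hX hh
  · rw [dComp_fix_eq_ker hX hh]
    ext x
    simp only [Set.mem_inter_iff, Set.mem_setOf_eq, Set.mem_singleton_iff]
    constructor
    · rintro ⟨h1, h2⟩; rw [← h1, h2]
    · rintro rfl; exact ⟨hh.zero, hh.zero⟩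
  · intro x
    refine ⟨h x, hh.idem x, x - h x, ?_, by abel⟩
    rw [dComp_fix_eq_ker hX hh]
    exact hh.ker_of_fix_compl x

lemma combo_fixes (hX : IsPreRiesz X) (hf : Nice f) (hg : Nice g) {b c : X}
    (hb : f b = b) (hc : g c = c) : f (b + c) + g ((b + c) - f (b + c)) = b + c := by
  have h1 : f (b + c) = b + f c := by rw [hf.add, hb]
  rw [h1, show b + c - (b + f c) = c - f c from by abel, hg.sub,
    show g (f c) = f (g c) from (comm hX hf hg c).symm, hc]
  abel

lemma nice_combo (hX : IsPreRiesz X) (hf : Nice f) (hg : Nice g) :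
    Nice (fun x => f x + g (x - f x)) := by
  constructor
  · intro x y
    rw [hf.add, show x + y - (f x + f y) = (x - f x) + (y - f y) from by abel, hg.add]
    abel
  · intro x
    exact combo_fixes hX hf hg (hf.idem x) (hg.idem _)
  · intro x hx
    have h1 : 0 ≤ f x := hf.pos x hx
    have h2 : 0 ≤ g (x - f x) := hg.pos _ (sub_nonneg.mpr (hf.dom x hx))
    exact add_nonneg h1 h2
  · intro x hx
    have h2 : g (x - f x) ≤ x - f x := hg.dom _ (sub_nonneg.mpr (hf.dom x hx))
    calc f x + g (x - f x) ≤ f x + (x - f x) := add_le_add_right h2 _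
    _ = x := by abel

lemma combo_fix_eq (hX : IsPreRiesz X) (hf : Nice f) (hg : Nice g) :
    {x : X | f x + g (x - f x) = x} = {x : X | f x = x} + {x : X | g x = x} := by
  ext x
  constructor
  · intro hx
    have : x = f x + g (x - f x) := hx.symm
    rw [Set.mem_add]
    exact ⟨f x, hf.idem x, g (x - f x), hg.idem _, hx⟩
  · intro hx
    rw [Set.mem_add] at hx
    obtain ⟨b, hb, c, hc, rfl⟩ := hx
    exact combo_fixes hX hf hg hb hc

lemma combo_ker_iff (hX : IsPreRiesz X) (hf : Nice f) (hg : Nice g) (x : X) :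
    f x + g (x - f x) = 0 ↔ f x = 0 ∧ g x = 0 := by
  constructor
  · intro hx
    have hker : f (x - f x) = 0 := by rw [hf.sub, hf.idem, sub_self]
    have h1 : f (f x + g (x - f x)) = f x := by
      rw [hf.add, hf.idem, ker_inv hX hf hg hker, add_zero]
    rw [hx, hf.zero] at h1
    have h2 : g x = 0 := by
      rw [← h1] at hx
      simpa using hx
    exact ⟨h1.symm, h2⟩
  · rintro ⟨h1, h2⟩
    rw [h1, sub_zero, h2, add_zero]


end Nice

lemma zero_mem_dComp (S : Set X) : (0:X) ∈ dComp S := fun s _ => udis_symm (udisjoint_zero_right s)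

lemma neg_mem_dComp {S : Set X} {x : X} (h : x ∈ dComp S) : -x ∈ dComp S :=
  fun s hs => udis_neg_left (h s hs)

lemma zero_mem_projband {B : Set X} (hB : IsProjBand B) : (0:X) ∈ B := by
  rw [hB.1]; exact zero_mem_dComp _

lemma neg_mem_projband {B : Set X} (hB : IsProjBand B) {b : X} (hb : b ∈ B) : -b ∈ B := by
  rw [hB.1] at hb ⊢; exact neg_mem_dComp hb

lemma dComp_add_closed (hX : IsPreRiesz X) {B : Set X} (hB : IsProjBand B) {s₁ s₂ : X}
    (h1 : s₁ ∈ dComp B) (h2 : s₂ ∈ dComp B) : s₁ + s₂ ∈ dComp B := by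
  obtain ⟨β, hβ, ς, hς, hsum⟩ := hB.2.2 (s₁ + s₂)
  have hβ0 : β = 0 := disj_add_eq_zero hX hsum (h1 β hβ) (h2 β hβ) (hς β hβ)
  rw [hβ0, zero_add] at hsum
  rw [hsum]; exact hς

lemma band_add_closed (hX : IsPreRiesz X) {B : Set X} (hB : IsProjBand B) {b₁ b₂ : X}
    (h1 : b₁ ∈ B) (h2 : b₂ ∈ B) : b₁ + b₂ ∈ B := by
  obtain ⟨β, hβ, ς, hς, hsum⟩ := hB.2.2 (b₁ + b₂)
  have hsum' : b₁ + b₂ = ς + β := by rw [hsum]; exact add_comm β ς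
  have hς0 : ς = 0 := disj_add_eq_zero hX hsum' (udis_symm (hς b₁ h1))
    (udis_symm (hς b₂ h2)) (udis_symm (hς β hβ))
  rw [hς0, add_zero] at hsum
  rw [hsum]; exact hβ

lemma band_sub_closed (hX : IsPreRiesz X) {B : Set X} (hB : IsProjBand B) {b₁ b₂ : X}
    (h1 : b₁ ∈ B) (h2 : b₂ ∈ B) : b₁ - b₂ ∈ B := by
  rw [sub_eq_add_neg]; exact band_add_closed hX hB h1 (neg_mem_projband hB h2)

lemma dComp_sub_closed {B : Set X} {s₁ s₂ : X} (hX : IsPreRiesz X) (hB : IsProjBand B)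
    (h1 : s₁ ∈ dComp B) (h2 : s₂ ∈ dComp B) : s₁ - s₂ ∈ dComp B := by
  rw [sub_eq_add_neg]; exact dComp_add_closed hX hB h1 (neg_mem_dComp h2)

noncomputable def projMap (B : Set X) (hB : IsProjBand B) : X → X := fun x => (hB.2.2 x).choose

lemma projMap_spec {B : Set X} (hB : IsProjBand B) (x : X) :
    projMap B hB x ∈ B ∧ x - projMap B hB x ∈ dComp B := by
  obtain ⟨hb, c, hc, hx⟩ := (hB.2.2 x).choose_spec
  have hb' : projMap B hB x ∈ B := hb
  have hx' : x = projMap B hB x + c := hx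
  refine ⟨hb', ?_⟩
  rw [sub_eq_iff_eq_add'.mpr hx']
  exact hc

lemma projMap_eq (hX : IsPreRiesz X) {B : Set X} (hB : IsProjBand B) {x b s : X}
    (hb : b ∈ B) (hs : s ∈ dComp B) (hx : x = b + s) : projMap B hB x = b := by
  obtain ⟨hb', hc'⟩ := projMap_spec hB x
  set p := projMap B hB x
  have hd : p - b ∈ B := band_sub_closed hX hB hb' hb
  have hd2 : p - b ∈ dComp B := by
    have : s - (x - p) ∈ dComp B := dComp_sub_closed hX hB hs hc'
    rwa [show s - (x - p) = p - b from by rw [hx]; abel] at this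
  have : p - b ∈ B ∩ dComp B := ⟨hd, hd2⟩
  rw [hB.2.1] at this
  have h0 : p - b = 0 := this
  have := sub_eq_zero.mp h0
  exact this

lemma projMap_nice (hX : IsPreRiesz X) {B : Set X} (hB : IsProjBand B) :
    Nice (projMap B hB) := by
  constructor
  · intro x y
    obtain ⟨hx1, hx2⟩ := projMap_spec hB x
    obtain ⟨hy1, hy2⟩ := projMap_spec hB y
    exact projMap_eq hX hB (band_add_closed hX hB hx1 hy1) (dComp_add_closed hX hB hx2 hy2)
      (by abel)
  · intro x
    exact projMap_eq hX hB (projMap_spec hB x).1 (zero_mem_dComp B) (by rw [add_zero])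
  · intro x hx
    obtain ⟨h1, h2⟩ := projMap_spec hB x
    have hd : UDisjoint (projMap B hB x) (x - projMap B hB x) := udis_symm (h2 _ h1)
    exact (parts_nonneg hd (by rwa [add_sub_cancel])).1
  · intro x hx
    obtain ⟨h1, h2⟩ := projMap_spec hB x
    have hd : UDisjoint (projMap B hB x) (x - projMap B hB x) := udis_symm (h2 _ h1)
    have := (parts_nonneg hd (by rwa [add_sub_cancel])).2
    exact sub_nonneg.mp (by rwa [] at this)

lemma projMap_fix_eq (hX : IsPreRiesz X) {B : Set X} (hB : IsProjBand B) :
    {x : X | projMap B hB x = x} = B := by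
  ext x
  constructor
  · intro hx
    rw [Set.mem_setOf_eq] at hx
    rw [← hx]
    exact (projMap_spec hB x).1
  · intro hx
    exact projMap_eq hX hB hx (zero_mem_dComp B) (by rw [add_zero])

lemma range_eq_fix {f : X → X} (hf : Nice f) : Set.range f = {x : X | f x = x} := by
  ext y
  constructor
  · rintro ⟨x, rfl⟩; exact hf.idem x
  · intro hy; exact ⟨y, hy⟩

lemma bandproj_nice {P : X →ₗ[ℝ] X} (hP : IsBandProj P) : Nice ⇑P := by
  have hidem : ∀ x, P (P x) = P x := by
    intro x
    have := LinearMap.ext_iff.mp hP.1 x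
    rwa [LinearMap.comp_apply] at this
  have hparts : ∀ x : X, 0 ≤ x → 0 ≤ P x ∧ 0 ≤ x - P x := by
    intro x hx
    have hker : x - P x ∈ (LinearMap.ker P : Set X) := by
      simp only [SetLike.mem_coe, LinearMap.mem_ker, map_sub, hidem, sub_self]
    rw [hP.2.2] at hker
    have hd : UDisjoint (P x) (x - P x) := udis_symm (hker (P x) ⟨x, rfl⟩)
    exact parts_nonneg hd (by rwa [add_sub_cancel])
  exact ⟨fun x y => map_add P x y, hidem, fun x hx => (hparts x hx).1,
    fun x hx => sub_nonneg.mp (hparts x hx).2⟩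

end PreRieszAux

/-- `P + Q - PQ` is a band projection with range `PX + QX`; in particular the sum of two
projection bands is a projection band. -/
theorem stmt_6 (hX : IsPreRiesz X) (P Q : X →ₗ[ℝ] X)
    (hP : IsBandProj P) (hQ : IsBandProj Q) :
    IsBandProj (P + Q - P ∘ₗ Q) ∧
    Set.range ⇑(P + Q - P ∘ₗ Q) = Set.range ⇑P + Set.range ⇑Q ∧
    (∀ B C : Set X, IsProjBand B → IsProjBand C → IsProjBand (B + C)) := by
  have hfP : Nice ⇑P := bandproj_nice hP
  have hfQ : Nice ⇑Q := bandproj_nice hQ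
  have hcoe : ⇑(P + Q - P ∘ₗ Q) = fun x => P x + Q (x - P x) := by
    funext x
    simp only [LinearMap.sub_apply, LinearMap.add_apply, LinearMap.coe_comp, Function.comp_apply]
    rw [map_sub, Nice.comm hX hfP hfQ x]
    abel
  have hniceR : Nice ⇑(P + Q - P ∘ₗ Q) := by
    rw [hcoe]; exact Nice.nice_combo hX hfP hfQ
  have hrange : Set.range ⇑(P + Q - P ∘ₗ Q) = Set.range ⇑P + Set.range ⇑Q := by
    rw [range_eq_fix hniceR, range_eq_fix hfP, range_eq_fix hfQ, hcoe]
    exact Nice.combo_fix_eq hX hfP hfQ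
  refine ⟨⟨?_, ?_, ?_⟩, hrange, ?_⟩
  · ext x
    rw [LinearMap.comp_apply]
    exact hniceR.idem x
  · rw [range_eq_fix hniceR]
    exact Nice.projband_fix hX hniceR
  · rw [range_eq_fix hniceR, Nice.dComp_fix_eq_ker hX hniceR]
    ext x
    simp only [SetLike.mem_coe, LinearMap.mem_ker, Set.mem_setOf_eq]
  · intro B C hB hC
    have hf := projMap_nice hX hB
    have hg := projMap_nice hX hC
    have := Nice.projband_fix hX (Nice.nice_combo hX hf hg)
    rwa [Nice.combo_fix_eq hX hf hg, projMap_fix_eq hX hB, projMap_fix_eq hX hC] at this
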